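/- Let φ be C^{k+1} on [a,b] with grid points x_j = a + j·h, h = (b−a)/N, and let Pφ be the piecewise degree-(2k+1) Hermite interpolant on each cell [x_j, x_{j+1}] matching derivatives of orders 0,...,k of φ at the grid points. Then ∫_a^b (Pφ)(x) dx = ∫_a^b φ(x) dx − h^{k+1} ∫_a^b E_k((x−a)/h) φ^{(k+1)}(x) dx, where E_k is the 1-periodic extension of μ_k = r_k^{(k+1)}, r_k(x) = x^{k+1}(1−x)^{k+1}/(2k+2)!. -/

import Mathlib

open Polynomial

lemma poly_iteratedDeriv (p : Polynomial ℝ) (n : ℕ) :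
    iteratedDeriv n (fun t : ℝ => p.eval t) = fun t => (derivative^[n] p).eval t := by
  induction n with
  | zero => simp
  | succ n ih =>
    rw [iteratedDeriv_succ, ih, Function.iterate_succ_apply']
    funext t
    exact Polynomial.deriv _

noncomputable def rhoPoly (k : ℕ) : Polynomial ℝ :=
  Polynomial.C (((2*k+2).factorial : ℝ)⁻¹) * (Polynomial.X^(k+1) * (1 - Polynomial.X)^(k+1))

lemma rhoPoly_eval (k : ℕ) (t : ℝ) :
    (rhoPoly k).eval t = t^(k+1) * (1-t)^(k+1) / ((2*k+2).factorial : ℝ) := by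
  simp [rhoPoly, div_eq_mul_inv]; ring

lemma rhoPoly_root0 (k m : ℕ) (hm : m ≤ k) :
    (derivative^[m] (rhoPoly k)).eval 0 = 0 := by
  have hdvd : (X - C (0:ℝ))^(k+1) ∣ rhoPoly k := by
    refine ⟨Polynomial.C (((2*k+2).factorial : ℝ)⁻¹) * (1 - Polynomial.X)^(k+1), ?_⟩
    simp [rhoPoly]; ring
  obtain ⟨s, hs⟩ := Polynomial.pow_sub_dvd_iterate_derivative_of_pow_dvd m hdvd
  rw [hs]
  have : k + 1 - m ≠ 0 := by omega
  simp [this, zero_pow this]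

lemma rhoPoly_root1 (k m : ℕ) (hm : m ≤ k) :
    (derivative^[m] (rhoPoly k)).eval 1 = 0 := by
  have hdvd : (X - C (1:ℝ))^(k+1) ∣ rhoPoly k := by
    refine ⟨Polynomial.C (((2*k+2).factorial : ℝ)⁻¹) * (-1)^(k+1) * Polynomial.X^(k+1), ?_⟩
    simp only [rhoPoly]
    have h0 : (1 - Polynomial.X : ℝ[X]) = -(X - C 1) := by simp
    rw [h0, neg_pow]; ring
  obtain ⟨s, hs⟩ := Polynomial.pow_sub_dvd_iterate_derivative_of_pow_dvd m hdvd
  rw [hs]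
  have : k + 1 - m ≠ 0 := by omega
  simp [this, zero_pow this]

lemma rhoPoly_coeff_top (k : ℕ) :
    (rhoPoly k).coeff (2*k+2) = (((2*k+2).factorial : ℝ)⁻¹) * (-1)^(k+1) := by
  have h1 : (2*k+2) = (k+1) + (k+1) := by ring
  rw [rhoPoly, Polynomial.coeff_C_mul, h1, Polynomial.coeff_X_pow_mul]
  have h2 : ((1 : ℝ[X]) - X)^(k+1) = C ((-1:ℝ)^(k+1)) * (X - C 1)^(k+1) := by
    have h0 : (1 - Polynomial.X : ℝ[X]) = -(X - C 1) := by simp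
    rw [h0, neg_pow, map_pow, map_neg, map_one]
  rw [h2, Polynomial.coeff_C_mul]
  have hn : ((X - C (1:ℝ))^(k+1)).natDegree = k+1 := by
    rw [Polynomial.natDegree_pow, Polynomial.natDegree_X_sub_C, mul_one]
  have hm := ((Polynomial.monic_X_sub_C (1:ℝ)).pow (k+1)).coeff_natDegree
  rw [hn] at hm
  rw [hm, mul_one]

lemma rhoPoly_natDegree_le (k : ℕ) : (rhoPoly k).natDegree ≤ 2*k+2 := by
  refine le_trans (Polynomial.natDegree_mul_le) ?_
  simp only [Polynomial.natDegree_C, zero_add]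
  refine le_trans (Polynomial.natDegree_mul_le) ?_
  have h1 : (Polynomial.X^(k+1) : ℝ[X]).natDegree ≤ k+1 := Polynomial.natDegree_X_pow_le _
  have h2 : (((1:ℝ[X]) - Polynomial.X)^(k+1)).natDegree ≤ k+1 := by
    refine le_trans (Polynomial.natDegree_pow_le) ?_
    have : ((1:ℝ[X]) - Polynomial.X).natDegree ≤ 1 := by
      refine le_trans (Polynomial.natDegree_sub_le _ _) ?_
      simp
    nlinarith [this]
  omega

lemma rhoPoly_top (k : ℕ) :
    derivative^[2*k+2] (rhoPoly k) = Polynomial.C ((-1:ℝ)^(k+1)) := by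
  have hd : (derivative^[2*k+2] (rhoPoly k)).natDegree = 0 := by
    have := Polynomial.natDegree_iterate_derivative (rhoPoly k) (2*k+2)
    have := rhoPoly_natDegree_le k
    omega
  have := Polynomial.eq_C_of_natDegree_le_zero (le_of_eq hd)
  rw [this, Polynomial.coeff_iterate_derivative]
  simp only [zero_add, Nat.descFactorial_self, nsmul_eq_mul]
  rw [rhoPoly_coeff_top]
  congr 1
  rw [← mul_assoc, mul_inv_cancel₀
    (by positivity : ((2*k+2).factorial : ℝ) ≠ 0), one_mul]

open MeasureTheory intervalIntegral Set in
lemma hermite_cell (k : ℕ) (a b c h : ℝ) (hh : 0 < h) (hac : a ≤ c) (hcb : c + h ≤ b)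
    (φ : ℝ → ℝ) (hφ : ContDiffOn ℝ (k + 1 : ℕ) φ (Set.Icc a b))
    (p : Polynomial ℝ) (hdeg : p.natDegree ≤ 2 * k + 1)
    (hc : ∀ α ≤ k, (derivative^[α] p).eval c = iteratedDerivWithin α φ (Set.Icc a b) c)
    (hd : ∀ α ≤ k, (derivative^[α] p).eval (c+h) =
      iteratedDerivWithin α φ (Set.Icc a b) (c+h)) :
    ∫ x in c..(c+h), p.eval x
      = (∫ x in c..(c+h), φ x)
        - ∫ x in c..(c+h),
            (h^(k+1) * (derivative^[k+1] (rhoPoly k)).eval ((x - c)/h)) *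
              iteratedDerivWithin (k+1) φ (Set.Icc a b) x := by
  have hne : h ≠ 0 := ne_of_gt hh
  set d := c + h with hdm
  have hcd : c < d := by simp [hdm]; linarith
  have hab : a < b := by linarith
  set S := Set.Icc a b with hSdef
  have hS : UniqueDiffOn ℝ S := uniqueDiffOn_Icc hab
  set u : ℕ → ℝ → ℝ := fun m x => h^(2*k+2-m) * (derivative^[m] (rhoPoly k)).eval ((x - c)/h)
    with hu_def
  set g : ℕ → ℝ → ℝ := fun m x => iteratedDerivWithin m φ S x - (derivative^[m] p).eval x
    with hg_def
  set q : ℕ → ℝ → ℝ := fun m x => (derivative^[m] p).eval x with hq_def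
  -- facts about u
  have hu_cont : ∀ m, Continuous (u m) := by
    intro m
    exact continuous_const.mul ((Polynomial.continuous _).comp
      ((continuous_id.sub continuous_const).div_const h))
  have hu_deriv : ∀ m, m ≤ 2*k+1 → ∀ x : ℝ, HasDerivAt (u m) (u (m+1) x) x := by
    intro m hm x
    have hlin : HasDerivAt (fun y : ℝ => (y - c)/h) (1/h) x := by
      simpa using ((hasDerivAt_id x).sub_const c).div_const h
    have hcomp := (Polynomial.hasDerivAt (derivative^[m] (rhoPoly k)) ((x - c)/h)).comp x hlin
    have := hcomp.const_mul (h^(2*k+2-m))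
    refine this.congr_deriv ?_
    rw [hu_def]
    simp only [Function.comp_def, Function.iterate_succ_apply']
    have he : 2*k+2-m = (2*k+2-(m+1)) + 1 := by omega
    rw [he, pow_succ]
    field_simp
  have hu_c : ∀ m, m ≤ k → u m c = 0 := by
    intro m hm
    simp only [hu_def, sub_self, zero_div]
    rw [rhoPoly_root0 k m hm, mul_zero]
  have hu_d : ∀ m, m ≤ k → u m d = 0 := by
    intro m hm
    have : (d - c)/h = 1 := by field_simp [hdm]; rw [hdm]; ring
    simp only [hu_def, this]
    rw [rhoPoly_root1 k m hm, mul_zero]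
  have hu_top : ∀ x : ℝ, u (2*k+2) x = (-1:ℝ)^(k+1) := by
    intro x
    simp [hu_def, rhoPoly_top k]
  -- facts about g
  have hIccsub : Set.Icc c d ⊆ S := Set.Icc_subset_Icc hac (by simpa [hdm] using hcb)
  have hg_cont : ∀ m, m ≤ k+1 → ContinuousOn (g m) S := by
    intro m hm
    exact (hφ.continuousOn_iteratedDerivWithin (by exact_mod_cast hm) hS).sub
      (Polynomial.continuous _).continuousOn
  have hg_deriv : ∀ m, m ≤ k → ∀ x ∈ Set.Ioo c d, HasDerivAt (g m) (g (m+1) x) x := by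
    intro m hm x hx
    have hxS : x ∈ S := hIccsub (Set.Ioo_subset_Icc_self hx)
    have hnhds : S ∈ nhds x := Icc_mem_nhds (by linarith [hx.1]) (by
      have := hx.2; simp only [hdm] at this ⊢; linarith)
    have hdiff := hφ.differentiableOn_iteratedDerivWithin
      (by exact_mod_cast Nat.lt_succ_of_le hm : (m : WithTop ℕ∞) < (k+1 : ℕ)) hS
    have h1 : HasDerivWithinAt (iteratedDerivWithin m φ S)
        (iteratedDerivWithin (m+1) φ S x) S x := by
      have h2 := (hdiff x hxS).hasDerivWithinAt
      rwa [← iteratedDerivWithin_succ] at h2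
    have h3 := h1.hasDerivAt hnhds
    have h4 : HasDerivAt (fun t : ℝ => (derivative^[m] p).eval t)
        ((derivative^[m+1] p).eval x) x := by
      rw [Function.iterate_succ_apply']
      exact Polynomial.hasDerivAt _ x
    exact h3.sub h4
  have hg_c : ∀ m, m ≤ k → g m c = 0 := by
    intro m hm; simp only [hg_def]; rw [hc m hm]; ring
  have hg_d : ∀ m, m ≤ k → g m d = 0 := by
    intro m hm; simp only [hg_def]; rw [hd m hm]; ring
  -- integrability
  have hint_ug : ∀ i j, j ≤ k+1 → IntervalIntegrable (fun x => u i x * g j x) volume c d := by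
    intro i j hj
    apply ContinuousOn.intervalIntegrable
    rw [Set.uIcc_of_le hcd.le]
    exact ((hu_cont i).continuousOn).mul ((hg_cont j hj).mono hIccsub)
  have hint_uq : ∀ i j, IntervalIntegrable (fun x => u i x * q j x) volume c d := by
    intro i j
    apply ContinuousOn.intervalIntegrable
    exact (((hu_cont i).mul (Polynomial.continuous _)).continuousOn)
  -- Claim A
  have claimA : ∀ m, m ≤ k+1 →
      ∫ x in c..d, u (k+1) x * g (k+1) x
        = (-1:ℝ)^m * ∫ x in c..d, u (k+1+m) x * g (k+1-m) x := by
    intro m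
    induction m with
    | zero => intro _; simp
    | succ m ih =>
      intro hm1
      have hm : m ≤ k := by omega
      have prev := ih (by omega)
      have hibp := integral_deriv_mul_eq_sub_of_hasDerivAt
        (u := u (k+1+m)) (u' := u (k+1+m+1)) (v := g (k-m)) (v' := g (k-m+1))
        (a := c) (b := d)
        ((hu_cont (k+1+m)).continuousOn)
        (by
          rw [Set.uIcc_of_le hcd.le]
          exact (hg_cont (k-m) (by omega)).mono hIccsub)
        (fun x _ => hu_deriv (k+1+m) (by omega) x)
        (by
          rw [min_eq_left hcd.le, max_eq_right hcd.le]
          exact fun x hx => hg_deriv (k-m) (by omega) x hx)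
        ((hu_cont (k+1+m+1)).intervalIntegrable c d)
        (by
          apply ContinuousOn.intervalIntegrable
          rw [Set.uIcc_of_le hcd.le]
          exact (hg_cont (k-m+1) (by omega)).mono hIccsub)
      rw [hg_c (k-m) (by omega), hg_d (k-m) (by omega)] at hibp
      simp only [mul_zero, sub_zero] at hibp
      have hsplit : (∫ x in c..d, (u (k+1+m+1) x * g (k-m) x + u (k+1+m) x * g (k-m+1) x))
          = (∫ x in c..d, u (k+1+m+1) x * g (k-m) x)
            + ∫ x in c..d, u (k+1+m) x * g (k-m+1) x := by
        exact integral_add (hint_ug _ _ (by omega)) (hint_ug _ _ (by omega))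
      have hzero : (∫ x in c..d, u (k+1+m+1) x * g (k-m) x)
            + (∫ x in c..d, u (k+1+m) x * g (k-m+1) x) = 0 := by
        rw [← hsplit]
        exact hibp
      have e1 : k+1-m = (k-m)+1 := by omega
      have e2 : k+1-(m+1) = k-m := by omega
      have e3 : k+1+(m+1) = k+1+m+1 := by omega
      rw [prev, e1, e2, e3]
      have : (∫ x in c..d, u (k+1+m) x * g ((k-m)+1) x)
          = - ∫ x in c..d, u (k+1+m+1) x * g (k-m) x := by linarith
      rw [this]
      ring
  -- Claim B
  have claimB : ∀ m, m ≤ k+1 →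
      ∫ x in c..d, u (k+1) x * q (k+1) x
        = (-1:ℝ)^m * ∫ x in c..d, u (k+1-m) x * q (k+1+m) x := by
    intro m
    induction m with
    | zero => intro _; simp
    | succ m ih =>
      intro hm1
      have hm : m ≤ k := by omega
      have prev := ih (by omega)
      have hibp := integral_deriv_mul_eq_sub_of_hasDerivAt
        (u := q (k+1+m)) (u' := q (k+1+m+1)) (v := u (k-m)) (v' := u (k-m+1))
        (a := c) (b := d)
        ((Polynomial.continuous _).continuousOn)
        ((hu_cont (k-m)).continuousOn)
        (by
          intro x hx
          have : HasDerivAt (fun t : ℝ => (derivative^[k+1+m] p).eval t)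
              ((derivative^[k+1+m+1] p).eval x) x := by
            rw [Function.iterate_succ_apply']
            exact Polynomial.hasDerivAt _ x
          exact this)
        (by
          intro x hx
          exact hu_deriv (k-m) (by omega) x)
        ((Polynomial.continuous _).intervalIntegrable c d)
        ((hu_cont (k-m+1)).intervalIntegrable c d)
      rw [hu_c (k-m) (by omega), hu_d (k-m) (by omega)] at hibp
      simp only [mul_zero, sub_zero, zero_sub] at hibp
      have hsplit : (∫ x in c..d, (q (k+1+m+1) x * u (k-m) x + q (k+1+m) x * u (k-m+1) x))
          = (∫ x in c..d, q (k+1+m+1) x * u (k-m) x)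
            + ∫ x in c..d, q (k+1+m) x * u (k-m+1) x := by
        have h1 : IntervalIntegrable (fun x => q (k+1+m+1) x * u (k-m) x) volume c d := by
          apply ContinuousOn.intervalIntegrable
          exact ((Polynomial.continuous _).mul (hu_cont _)).continuousOn
        have h2 : IntervalIntegrable (fun x => q (k+1+m) x * u (k-m+1) x) volume c d := by
          apply ContinuousOn.intervalIntegrable
          exact ((Polynomial.continuous _).mul (hu_cont _)).continuousOn
        exact integral_add h1 h2
      have hzero : (∫ x in c..d, q (k+1+m+1) x * u (k-m) x)
            + (∫ x in c..d, q (k+1+m) x * u (k-m+1) x) = 0 := by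
        rw [← hsplit]; exact hibp
      have e1 : k+1-m = (k-m)+1 := by omega
      have e2 : k+1-(m+1) = k-m := by omega
      have e3 : k+1+(m+1) = k+1+m+1 := by omega
      have ecomm1 : (∫ x in c..d, u ((k-m)+1) x * q (k+1+m) x)
          = ∫ x in c..d, q (k+1+m) x * u ((k-m)+1) x := by
        congr 1; funext x; ring
      have ecomm2 : (∫ x in c..d, u (k-m) x * q (k+1+m+1) x)
          = ∫ x in c..d, q (k+1+m+1) x * u (k-m) x := by
        congr 1; funext x; ring
      rw [prev, e1, e2, e3, ecomm1, ecomm2]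
      have : (∫ x in c..d, q (k+1+m) x * u ((k-m)+1) x)
          = - ∫ x in c..d, q (k+1+m+1) x * u (k-m) x := by linarith
      rw [this]
      ring
  -- evaluate the claims at m = k+1
  have e4 : k+1+(k+1) = 2*k+2 := by omega
  have e5 : k+1-(k+1) = 0 := by omega
  have hA := claimA (k+1) le_rfl
  rw [e4, e5] at hA
  have hg0int : (∫ x in c..d, u (2*k+2) x * g 0 x) = (-1:ℝ)^(k+1) * ∫ x in c..d, g 0 x := by
    rw [← intervalIntegral.integral_const_mul]
    congr 1; funext x; rw [hu_top x]
  rw [hg0int] at hA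
  have hsq : ((-1:ℝ)^(k+1)) * ((-1:ℝ)^(k+1)) = 1 := by
    rw [← mul_pow]
    norm_num
  have hA' : (∫ x in c..d, u (k+1) x * g (k+1) x) = ∫ x in c..d, g 0 x := by
    rw [hA, ← mul_assoc, hsq, one_mul]
  have hB := claimB (k+1) le_rfl
  rw [e4, e5] at hB
  have hq_zero : derivative^[2*k+2] p = 0 :=
    Polynomial.iterate_derivative_eq_zero (by omega)
  have hB' : (∫ x in c..d, u (k+1) x * q (k+1) x) = 0 := by
    rw [hB]
    have : (fun x => u 0 x * q (2*k+2) x) = fun _ => (0:ℝ) := by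
      funext x; simp [hq_def, hq_zero]
    rw [this]
    simp
  -- assemble
  have hφint : IntervalIntegrable φ volume c d := by
    apply ContinuousOn.intervalIntegrable
    rw [Set.uIcc_of_le hcd.le]
    exact (hφ.continuousOn).mono hIccsub
  have hpint : IntervalIntegrable (fun x => p.eval x) volume c d :=
    (Polynomial.continuous _).intervalIntegrable c d
  have hg0 : (∫ x in c..d, g 0 x) = (∫ x in c..d, φ x) - ∫ x in c..d, p.eval x := by
    have : (fun x => g 0 x) = fun x => φ x - p.eval x := by
      funext x; simp [hg_def, iteratedDerivWithin_zero]
    rw [this]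
    exact integral_sub hφint hpint
  have hDint : IntervalIntegrable (fun x => u (k+1) x *
      iteratedDerivWithin (k+1) φ S x) volume c d := by
    apply ContinuousOn.intervalIntegrable
    rw [Set.uIcc_of_le hcd.le]
    exact ((hu_cont _).continuousOn).mul
      ((hφ.continuousOn_iteratedDerivWithin (by exact_mod_cast le_rfl) hS).mono hIccsub)
  have hDsum : (∫ x in c..d, u (k+1) x * iteratedDerivWithin (k+1) φ S x)
      = (∫ x in c..d, u (k+1) x * g (k+1) x) + ∫ x in c..d, u (k+1) x * q (k+1) x := by
    rw [← integral_add (hint_ug _ _ le_rfl) (hint_uq _ _)]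
    congr 1; funext x
    simp only [hg_def, hq_def]
    ring
  have hfinal : (∫ x in c..d, u (k+1) x * iteratedDerivWithin (k+1) φ S x)
      = (∫ x in c..d, φ x) - ∫ x in c..d, p.eval x := by
    rw [hDsum, hA', hB', add_zero, hg0]
  have hu_eq : ∀ x, u (k+1) x
      = h^(k+1) * (derivative^[k+1] (rhoPoly k)).eval ((x - c)/h) := by
    intro x
    have : 2*k+2-(k+1) = k+1 := by omega
    simp only [hu_def, this]
  have : (∫ x in c..d, (h^(k+1) * (derivative^[k+1] (rhoPoly k)).eval ((x - c)/h)) *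
      iteratedDerivWithin (k+1) φ S x)
      = ∫ x in c..d, u (k+1) x * iteratedDerivWithin (k+1) φ S x := by
    congr 1; funext x; rw [hu_eq x]
  rw [this, hfinal]
  ring

open MeasureTheory intervalIntegral Set in
/-- Global average formula for the piecewise Hermite interpolant on a uniform grid.
Let `φ` be `C^{k+1}` on `[a,b]`, with grid points `x_j = a + j·h`, `h = (b-a)/N`, and let
`Pφ` agree on each cell `[x_j, x_{j+1}]` with the degree-`(2k+1)` Hermite interpolant of
`φ` (matching derivatives of orders `0,…,k` at the cell endpoints). Then
`∫_a^b Pφ = ∫_a^b φ - h^{k+1} ∫_a^b E_k((x-a)/h) φ^{(k+1)}(x) dx`,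
where `E_k` is the 1-periodic extension of `μ_k = r_k^{(k+1)}`,
`r_k x = x^{k+1}(1-x)^{k+1}/(2k+2)!`. -/
theorem piecewise_hermite_global_average (k N : ℕ) (hN : 0 < N) (a b : ℝ) (hab : a < b)
    (φ Pφ : ℝ → ℝ)
    (hφ : ContDiffOn ℝ (k + 1 : ℕ) φ (Set.Icc a b))
    (h : ℝ) (hh : h = (b - a) / N)
    (hP : ∀ j < N, ∃ p : Polynomial ℝ, p.natDegree ≤ 2 * k + 1 ∧
      (∀ x ∈ Set.Icc (a + j * h) (a + (j + 1) * h), Pφ x = p.eval x) ∧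
      (∀ α ≤ k, iteratedDeriv α (fun t => p.eval t) (a + j * h) =
          iteratedDerivWithin α φ (Set.Icc a b) (a + j * h)) ∧
      (∀ α ≤ k, iteratedDeriv α (fun t => p.eval t) (a + (j + 1) * h) =
          iteratedDerivWithin α φ (Set.Icc a b) (a + (j + 1) * h))) :
    let r : ℝ → ℝ := fun x => x ^ (k + 1) * (1 - x) ^ (k + 1) / (Nat.factorial (2 * k + 2))
    let μ : ℝ → ℝ := iteratedDeriv (k + 1) r
    let E : ℝ → ℝ := fun z => μ (Int.fract z)
    ∫ x in a..b, Pφ x =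
      (∫ x in a..b, φ x) -
        h ^ (k + 1) *
          ∫ x in a..b, E ((x - a) / h) * iteratedDerivWithin (k + 1) φ (Set.Icc a b) x := by
  intro r μ E
  have hh0 : 0 < h := by
    rw [hh]
    apply div_pos (by linarith) (by exact_mod_cast hN)
  have hne : h ≠ 0 := ne_of_gt hh0
  have hNne : (N : ℝ) ≠ 0 := by exact_mod_cast hN.ne'
  have hNh : a + N * h = b := by rw [hh]; field_simp; ring
  set c : ℕ → ℝ := fun i => a + i * h with hc_def
  have hstep : ∀ j : ℕ, c (j+1) = c j + h := by
    intro j; simp only [hc_def]; push_cast; ring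
  have hc0 : c 0 = a := by simp [hc_def]
  have hcN : c N = b := by simp only [hc_def]; exact hNh
  have hmono : ∀ j : ℕ, c j < c (j+1) := by
    intro j; rw [hstep]; linarith
  have hbounds : ∀ j : ℕ, j ≤ N → a ≤ c j ∧ c j ≤ b := by
    intro j hj
    constructor
    · simp only [hc_def]; nlinarith [Nat.cast_nonneg (α := ℝ) j]
    · rw [← hcN]
      simp only [hc_def]
      have : (j : ℝ) ≤ N := by exact_mod_cast hj
      nlinarith
  -- identify μ with the polynomial derivative
  have hμ : μ = fun t => (derivative^[k+1] (rhoPoly k)).eval t := by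
    have hrρ : r = fun t : ℝ => (rhoPoly k).eval t := by
      funext t
      rw [rhoPoly_eval]
    show iteratedDeriv (k+1) r = _
    rw [hrρ, poly_iteratedDeriv]
  -- choose the polynomials
  choose p hdeg hval hcd hdd using hP
  -- define the comparison integrand for each cell
  set Φ : ℝ → ℝ := iteratedDerivWithin (k+1) φ (Set.Icc a b) with hΦ_def
  set F : ℝ → ℝ := fun x => E ((x - a)/h) * Φ x with hF_def
  have hΦcont : ContinuousOn Φ (Set.Icc a b) :=
    hφ.continuousOn_iteratedDerivWithin (by exact_mod_cast le_rfl) (uniqueDiffOn_Icc hab)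
  have hIccsub : ∀ j : ℕ, j < N → Set.Icc (c j) (c (j+1)) ⊆ Set.Icc a b := by
    intro j hj
    exact Set.Icc_subset_Icc (hbounds j (by omega)).1 (hbounds (j+1) (by omega)).2
  -- key pointwise identity on the open cell
  have hkey : ∀ j : ℕ, j < N → ∀ x ∈ Set.Ioo (c j) (c (j+1)),
      F x = (derivative^[k+1] (rhoPoly k)).eval ((x - c j)/h) * Φ x := by
    intro j hj x hx
    have h1 : (j : ℝ) < (x - a)/h := by
      rw [lt_div_iff₀ hh0]
      have := hx.1; simp only [hc_def] at this; linarith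
    have h2 : (x - a)/h < j + 1 := by
      rw [div_lt_iff₀ hh0]
      have := hx.2; simp only [hc_def] at this; push_cast at this ⊢; linarith
    have hfloor : ⌊(x - a)/h⌋ = (j : ℤ) := by
      rw [Int.floor_eq_iff]
      constructor <;> push_cast <;> linarith
    have hfract : Int.fract ((x - a)/h) = (x - c j)/h := by
      rw [Int.fract, hfloor]
      simp only [hc_def]
      push_cast
      field_simp
      ring
    show μ (Int.fract ((x - a)/h)) * Φ x = _
    rw [hfract, hμ]
  -- integrability of the three integrands on each cell
  have hφint : ∀ j : ℕ, j < N → IntervalIntegrable φ volume (c j) (c (j+1)) := by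
    intro j hj
    apply ContinuousOn.intervalIntegrable
    rw [Set.uIcc_of_le (hmono j).le]
    exact hφ.continuousOn.mono (hIccsub j hj)
  have hPφeq : ∀ (j : ℕ) (hj : j < N), Set.EqOn Pφ (fun x => (p j hj).eval x)
      (Set.Icc (c j) (c (j+1))) := by
    intro j hj x hx
    apply hval j hj
    simp only [hc_def] at hx ⊢
    push_cast at hx ⊢
    exact hx
  have hPφint : ∀ j : ℕ, j < N → IntervalIntegrable Pφ volume (c j) (c (j+1)) := by
    intro j hj
    rw [intervalIntegrable_iff']
    rw [Set.uIcc_of_le (hmono j).le]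
    apply MeasureTheory.IntegrableOn.congr_fun _ (fun x hx => (hPφeq j hj hx).symm)
      measurableSet_Icc
    exact (Polynomial.continuous _).continuousOn.integrableOn_Icc
  have hGint : ∀ j : ℕ, j < N → IntegrableOn
      (fun x => (derivative^[k+1] (rhoPoly k)).eval ((x - c j)/h) * Φ x)
      (Set.Ioo (c j) (c (j+1))) volume := by
    intro j hj
    apply MeasureTheory.IntegrableOn.mono_set _ Set.Ioo_subset_Icc_self
    apply ContinuousOn.integrableOn_Icc
    exact (((Polynomial.continuous _).comp
      ((continuous_id.sub continuous_const).div_const h)).continuousOn).mul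
      (hΦcont.mono (hIccsub j hj))
  have hFint : ∀ j : ℕ, j < N → IntervalIntegrable F volume (c j) (c (j+1)) := by
    intro j hj
    rw [intervalIntegrable_iff_integrableOn_Ioc_of_le (hmono j).le,
      integrableOn_Ioc_iff_integrableOn_Ioo]
    exact MeasureTheory.IntegrableOn.congr_fun (hGint j hj)
      (fun x hx => (hkey j hj x hx).symm) measurableSet_Ioo
  -- per-cell integral identities
  have hFcell : ∀ j : ℕ, j < N →
      (∫ x in (c j)..(c (j+1)), F x)
        = ∫ x in (c j)..(c (j+1)),
            (derivative^[k+1] (rhoPoly k)).eval ((x - c j)/h) * Φ x := by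
    intro j hj
    apply intervalIntegral.integral_congr_ae
    have hnull : (volume : Measure ℝ) {c (j+1)} = 0 := measure_singleton _
    rw [MeasureTheory.ae_iff]
    apply measure_mono_null _ hnull
    intro x hx
    simp only [Set.mem_setOf_eq, not_forall] at hx
    obtain ⟨hxI, hxne⟩ := hx
    rw [Set.uIoc_of_le (hmono j).le] at hxI
    simp only [Set.mem_singleton_iff]
    by_contra hxd
    exact hxne (hkey j hj x ⟨hxI.1, lt_of_le_of_ne hxI.2 hxd⟩)
  have hcell : ∀ j : ℕ, j < N →
      (∫ x in (c j)..(c (j+1)), Pφ x)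
        = (∫ x in (c j)..(c (j+1)), φ x) - h^(k+1) * ∫ x in (c j)..(c (j+1)), F x := by
    intro j hj
    have hco : ∀ α ≤ k, (derivative^[α] (p j hj)).eval (c j) =
        iteratedDerivWithin α φ (Set.Icc a b) (c j) := by
      intro α hα
      have := hcd j hj α hα
      rw [poly_iteratedDeriv] at this
      exact this
    have hdo : ∀ α ≤ k, (derivative^[α] (p j hj)).eval (c j + h) =
        iteratedDerivWithin α φ (Set.Icc a b) (c j + h) := by
      intro α hα
      have := hdd j hj α hα
      rw [poly_iteratedDeriv] at this
      have he : a + ((j : ℝ) + 1) * h = c j + h := by simp only [hc_def]; ring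
      rw [he] at this
      exact this
    have hcl := hermite_cell k a b (c j) h hh0 (hbounds j (by omega)).1
      (by rw [← hstep]; exact (hbounds (j+1) (by omega)).2) φ hφ (p j hj) (hdeg j hj) hco hdo
    rw [← hstep j] at hcl
    have hPp : (∫ x in (c j)..(c (j+1)), Pφ x) = ∫ x in (c j)..(c (j+1)), (p j hj).eval x := by
      apply intervalIntegral.integral_congr
      rw [Set.uIcc_of_le (hmono j).le]
      exact hPφeq j hj
    rw [hPp, hcl, hFcell j hj]
    congr 1
    rw [← intervalIntegral.integral_const_mul]
    congr 1
    funext x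
    ring
  -- sum over cells
  have hsumP := intervalIntegral.sum_integral_adjacent_intervals
    (a := c) (n := N) (μ := volume) (f := Pφ) (fun j hj => hPφint j hj)
  have hsumφ := intervalIntegral.sum_integral_adjacent_intervals
    (a := c) (n := N) (μ := volume) (f := φ) (fun j hj => hφint j hj)
  have hsumF := intervalIntegral.sum_integral_adjacent_intervals
    (a := c) (n := N) (μ := volume) (f := F) (fun j hj => hFint j hj)
  rw [hc0, hcN] at hsumP hsumφ hsumF
  calc ∫ x in a..b, Pφ x
      = ∑ j ∈ Finset.range N, ∫ x in (c j)..(c (j+1)), Pφ x := hsumP.symm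
    _ = ∑ j ∈ Finset.range N, ((∫ x in (c j)..(c (j+1)), φ x)
          - h^(k+1) * ∫ x in (c j)..(c (j+1)), F x) := by
        apply Finset.sum_congr rfl
        intro j hj
        exact hcell j (Finset.mem_range.mp hj)
    _ = (∑ j ∈ Finset.range N, ∫ x in (c j)..(c (j+1)), φ x)
          - h^(k+1) * ∑ j ∈ Finset.range N, ∫ x in (c j)..(c (j+1)), F x := by
        rw [Finset.sum_sub_distrib, Finset.mul_sum]
    _ = (∫ x in a..b, φ x) - h^(k+1) * ∫ x in a..b, F x := by rw [hsumφ, hsumF]
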